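/- Let p be a positive integer, let g, h : ℝ^p → ℝ be convex, let f : ℝ^p → ℝ be convex and L-smooth with L > 0, and let γ > 0. Let y* ∈ ℝ^p be a fixed point, i.e., there is x* ∈ ℝ^p such that x* is a proximal point of g at y* with parameter γ and x* is a proximal point of h at 2x* − y* − γ∇f(x*) with parameter γ. Let sequences (y_k), (x_k), (z_k) in ℝ^p satisfy, for every k ≥ 0: (x_k, z_k) is a three-operator splitting step from y_k, and y_{k+1} = y_k − x_k + z_k. Then with G_i = (x_i − z_i)/γ, for every integer k ≥ 0 one has γ²(1 − γL/2)·∑_{i=0}^{k} ‖G_i‖² ≤ ‖y_0 − y*‖². -/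

import Mathlib

open RealInnerProductSpace

section Helpers

variable {E : Type*} [NormedAddCommGroup E] [InnerProductSpace ℝ E] [CompleteSpace E]

lemma inner_hasGradientAt (c u : E) : HasGradientAt (fun v => ⟪c, v⟫) c u := by
  rw [hasGradientAt_iff_hasFDerivAt]
  have : (InnerProductSpace.toDual ℝ E c : E →L[ℝ] ℝ) = innerSL ℝ c := by
    ext v; simp [InnerProductSpace.toDual_apply_apply]
  rw [this]
  exact (innerSL ℝ c).hasFDerivAt

lemma line_hasDerivAt {f : E → ℝ} {G : E → E} (hG : ∀ u, HasGradientAt f (G u) u)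
    (a v : E) (t : ℝ) :
    HasDerivAt (fun s : ℝ => f (a + s • v)) ⟪G (a + t • v), v⟫ t := by
  have h1 : HasDerivAt (fun s : ℝ => a + s • v) v t := by
    simpa using ((hasDerivAt_id t).smul_const v).const_add a
  have h2 := (hG (a + t • v)).hasFDerivAt.comp_hasDerivAt t h1
  simp only [InnerProductSpace.toDual_apply_apply] at h2
  exact h2

lemma grad_subgrad {f : E → ℝ} {G : E → E} (hf : ConvexOn ℝ Set.univ f)
    (hG : ∀ u, HasGradientAt f (G u) u) (x w : E) :
    f x + ⟪G x, w - x⟫ ≤ f w := by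
  have hd : HasDerivAt (fun s : ℝ => f (x + s • (w - x))) ⟪G x, w - x⟫ 0 := by
    simpa using line_hasDerivAt hG x (w - x) 0
  have hslope : Filter.Tendsto (slope (fun s : ℝ => f (x + s • (w - x))) 0)
      (nhdsWithin 0 (Set.Ioi 0)) (nhds ⟪G x, w - x⟫) := by
    have := (hasDerivAt_iff_tendsto_slope).1 hd
    exact this.mono_left (nhdsWithin_mono _ (fun t ht => ne_of_gt ht))
  have hev : ∀ᶠ t in nhdsWithin (0:ℝ) (Set.Ioi 0),
      slope (fun s : ℝ => f (x + s • (w - x))) 0 t ≤ f w - f x := by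
    filter_upwards [Ioc_mem_nhdsGT (zero_lt_one' ℝ)]
      with t ht
    have ht0 : 0 < t := ht.1
    have hcvx := hf.2 (Set.mem_univ x) (Set.mem_univ w)
      (show (0:ℝ) ≤ 1 - t by linarith [ht.2]) ht0.le (by ring)
    have hxeq : x + t • (w - x) = (1 - t) • x + t • w := by
      module
    rw [slope_def_field, sub_zero, div_le_iff₀ ht0]
    simp only [hxeq, zero_smul, add_zero]
    simp only [smul_eq_mul] at hcvx
    nlinarith [hcvx]
  have := le_of_tendsto hslope hev
  linarith

lemma descent_lemma {f : E → ℝ} {G : E → E} (hG : ∀ u, HasGradientAt f (G u) u)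
    {L : ℝ} (hlip : ∀ a b : E, ‖G a - G b‖ ≤ L * ‖a - b‖) (a b : E) :
    f b ≤ f a + ⟪G a, b - a⟫ + L / 2 * ‖b - a‖ ^ 2 := by
  set v := b - a with hv
  set φ : ℝ → ℝ := fun t => f (a + t • v) - t * ⟪G a, v⟫ - L / 2 * t ^ 2 * ‖v‖ ^ 2 with hφ
  have hφd : ∀ t : ℝ, HasDerivAt φ (⟪G (a + t • v), v⟫ - ⟪G a, v⟫ - L * t * ‖v‖ ^ 2) t := by
    intro t
    have h1 := line_hasDerivAt hG a v t
    have h2 : HasDerivAt (fun s : ℝ => s * ⟪G a, v⟫) ⟪G a, v⟫ t := by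
      simpa using (hasDerivAt_id t).mul_const (⟪G a, v⟫)
    have h3 : HasDerivAt (fun s : ℝ => L / 2 * s ^ 2 * ‖v‖ ^ 2) (L * t * ‖v‖ ^ 2) t := by
      have := ((hasDerivAt_pow 2 t).const_mul (L / 2)).mul_const (‖v‖ ^ 2)
      exact this.congr_deriv (by ring)
    exact (h1.sub h2).sub h3
  have hmono : AntitoneOn φ (Set.Icc 0 1) := by
    apply antitoneOn_of_deriv_nonpos (convex_Icc 0 1)
    · exact Continuous.continuousOn (continuous_iff_continuousAt.2
        fun t => (hφd t).continuousAt)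
    · exact fun t _ => (hφd t).differentiableAt.differentiableWithinAt
    · intro t ht
      rw [interior_Icc] at ht
      rw [(hφd t).deriv]
      have h4 : ⟪G (a + t • v), v⟫ - ⟪G a, v⟫ ≤ ‖G (a + t • v) - G a‖ * ‖v‖ := by
        rw [← inner_sub_left]
        exact real_inner_le_norm _ _
      have h5 : ‖G (a + t • v) - G a‖ ≤ L * (t * ‖v‖) := by
        have := hlip (a + t • v) a
        simpa [norm_smul, abs_of_pos ht.1, mul_assoc] using this
      nlinarith [norm_nonneg v, ht.1.le, norm_nonneg (G (a + t • v) - G a),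
        mul_le_mul_of_nonneg_right h5 (norm_nonneg v)]
  have key := hmono (Set.left_mem_Icc.2 zero_le_one) (Set.right_mem_Icc.2 zero_le_one)
    zero_le_one
  have h0 : φ 0 = f a := by simp [hφ]
  have h1 : φ 1 = f b - ⟪G a, v⟫ - L / 2 * ‖v‖ ^ 2 := by simp [hφ, hv]
  rw [h0, h1] at key
  linarith

lemma half_coco {f : E → ℝ} (hf : ConvexOn ℝ Set.univ f) {L : ℝ} (hL : 0 < L)
    (hdiff : Differentiable ℝ f)
    (hlip : ∀ a b : E, ‖gradient f a - gradient f b‖ ≤ L * ‖a - b‖) (a b : E) :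
    f b + ⟪gradient f b, a - b⟫ + 1 / (2 * L) * ‖gradient f a - gradient f b‖ ^ 2 ≤ f a := by
  set c := gradient f b with hc
  set F : E → ℝ := fun u => f u - ⟪c, u⟫ with hF
  set GF : E → E := fun u => gradient f u - c with hGF
  have hG : ∀ u : E, HasGradientAt F (GF u) u := by
    intro u
    have h1 := ((hdiff u).hasGradientAt.hasFDerivAt).sub ((inner_hasGradientAt c u).hasFDerivAt)
    exact hasGradientAt_iff_hasFDerivAt.2 (by rw [map_sub]; exact h1)
  have hFconv : ConvexOn ℝ Set.univ F := by
    refine ⟨convex_univ, fun u hu w hw s t hs ht hst => ?_⟩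
    have h2 := hf.2 hu hw hs ht hst
    have hlin : ⟪c, s • u + t • w⟫ = s * ⟪c, u⟫ + t * ⟪c, w⟫ := by
      simp [inner_add_right, real_inner_smul_right]
    simp only [hF, smul_eq_mul] at *
    linarith
  have hlipF : ∀ u w : E, ‖GF u - GF w‖ ≤ L * ‖u - w‖ := by
    intro u w
    simpa [hGF, sub_sub_sub_cancel_right] using hlip u w
  set w := GF a with hw
  have hmin : F b ≤ F (a - L⁻¹ • w) := by
    have h3 := grad_subgrad hFconv hG b (a - L⁻¹ • w)
    have h4 : GF b = 0 := by simp [hGF, hc]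
    simpa [h4] using h3
  have hdesc := descent_lemma hG hlipF a (a - L⁻¹ • w)
  have he1 : (a - L⁻¹ • w) - a = -(L⁻¹ • w) := by abel
  have he2 : ⟪GF a, -(L⁻¹ • w)⟫ = -(L⁻¹ * ‖w‖ ^ 2) := by
    rw [inner_neg_right, real_inner_smul_right, ← hw, real_inner_self_eq_norm_sq]
  have he3 : ‖-(L⁻¹ • w)‖ ^ 2 = L⁻¹ ^ 2 * ‖w‖ ^ 2 := by
    rw [norm_neg, norm_smul]
    simp [abs_of_pos (inv_pos.2 hL), mul_pow]
  rw [he1, he2, he3] at hdesc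
  have hcomb : F b ≤ F a - 1 / (2 * L) * ‖w‖ ^ 2 := by
    have heq : L / 2 * (L⁻¹ ^ 2 * ‖w‖ ^ 2) = 1 / (2 * L) * ‖w‖ ^ 2 := by
      field_simp
    calc F b ≤ F (a - L⁻¹ • w) := hmin
      _ ≤ F a + -(L⁻¹ * ‖w‖ ^ 2) + L / 2 * (L⁻¹ ^ 2 * ‖w‖ ^ 2) := hdesc
      _ ≤ F a - 1 / (2 * L) * ‖w‖ ^ 2 := by
          rw [heq]
          have h5 : L⁻¹ * ‖w‖ ^ 2 - 1 / (2 * L) * ‖w‖ ^ 2 = 1 / (2 * L) * ‖w‖ ^ 2 := by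
            field_simp; ring
          nlinarith [sq_nonneg ‖w‖]
  have hip : ⟪c, a⟫ - ⟪c, b⟫ = ⟪c, a - b⟫ := by rw [inner_sub_right]
  simp only [hF] at hcomb
  have hww : w = gradient f a - gradient f b := by rw [hw, hGF]
  rw [hww] at hcomb
  linarith [hcomb, hip.symm.le, hip.le]

lemma cocoercive {f : E → ℝ} (hf : ConvexOn ℝ Set.univ f) {L : ℝ} (hL : 0 < L)
    (hdiff : Differentiable ℝ f)
    (hlip : ∀ a b : E, ‖gradient f a - gradient f b‖ ≤ L * ‖a - b‖) (a b : E) :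
    1 / L * ‖gradient f a - gradient f b‖ ^ 2 ≤ ⟪gradient f a - gradient f b, a - b⟫ := by
  have h1 := half_coco hf hL hdiff hlip a b
  have h2 := half_coco hf hL hdiff hlip b a
  rw [norm_sub_rev] at h2
  have he : ⟪gradient f a, b - a⟫ = -⟪gradient f a, a - b⟫ := by
    rw [← inner_neg_right]; congr 1; abel
  rw [he] at h2
  rw [inner_sub_left]
  have h3 : (1:ℝ) / (2 * L) + 1 / (2 * L) = 1 / L := by
    rw [one_div, mul_inv, one_div]; ring
  have h4 : 1 / (2 * L) * ‖gradient f a - gradient f b‖ ^ 2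
      + 1 / (2 * L) * ‖gradient f a - gradient f b‖ ^ 2
      = 1 / L * ‖gradient f a - gradient f b‖ ^ 2 := by rw [← add_mul, h3]
  linarith

end Helpers

/-- `x` is a proximal point of `φ` at `y` with parameter `γ`:
it minimizes `u ↦ φ u + (1/(2γ)) ‖u - y‖²`. -/
def IsProxPt {p : ℕ} (γ : ℝ) (φ : EuclideanSpace ℝ (Fin p) → ℝ)
    (y x : EuclideanSpace ℝ (Fin p)) : Prop :=
  ∀ u : EuclideanSpace ℝ (Fin p),
    φ x + (1 / (2 * γ)) * ‖x - y‖ ^ 2 ≤ φ u + (1 / (2 * γ)) * ‖u - y‖ ^ 2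

/-- `(x, z)` is a three-operator splitting step from `y`. -/
def IsSplitStep {p : ℕ} (γ : ℝ) (g h f : EuclideanSpace ℝ (Fin p) → ℝ)
    (y x z : EuclideanSpace ℝ (Fin p)) : Prop :=
  IsProxPt γ g y x ∧ IsProxPt γ h ((2 : ℝ) • x - y - γ • gradient f x) z

/-- `f` is `L`-smooth: differentiable with `L`-Lipschitz gradient. -/
def LSmooth {p : ℕ} (L : ℝ) (f : EuclideanSpace ℝ (Fin p) → ℝ) : Prop :=
  Differentiable ℝ f ∧ ∀ a b : EuclideanSpace ℝ (Fin p),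
    ‖gradient f a - gradient f b‖ ≤ L * ‖a - b‖

/-- `u` is a subgradient of `φ` at `x`. -/
def IsSubgradient {p : ℕ} (φ : EuclideanSpace ℝ (Fin p) → ℝ)
    (x u : EuclideanSpace ℝ (Fin p)) : Prop :=
  ∀ w : EuclideanSpace ℝ (Fin p), φ w ≥ φ x + ⟪u, w - x⟫

lemma prox_subgrad {p : ℕ} {γ : ℝ} (hγ : 0 < γ) {φ : EuclideanSpace ℝ (Fin p) → ℝ}
    (hφ : ConvexOn ℝ Set.univ φ) {y x : EuclideanSpace ℝ (Fin p)}
    (hx : IsProxPt γ φ y x) : IsSubgradient φ x (γ⁻¹ • (y - x)) := by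
  intro u
  set C : ℝ := 1 / (2 * γ) * ‖u - x‖ ^ 2 with hCdef
  have hC : (0:ℝ) ≤ C := by positivity
  set I : ℝ := ⟪x - y, u - x⟫ with hI
  have hinner : ⟪γ⁻¹ • (y - x), u - x⟫ = -(γ⁻¹ * I) := by
    rw [real_inner_smul_left, hI, show y - x = -(x - y) by abel, inner_neg_left]
    ring
  set A : ℝ := φ u - φ x + γ⁻¹ * I with hA
  suffices h : 0 ≤ A by
    rw [ge_iff_le, hinner]
    simp only [hA] at h
    linarith
  have key : ∀ t : ℝ, 0 < t → t ≤ 1 → 0 ≤ A + t * C := by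
    intro t ht0 ht1
    have hprox := hx (x + t • (u - x))
    have hcvx := hφ.2 (Set.mem_univ x) (Set.mem_univ u)
      (show (0:ℝ) ≤ 1 - t by linarith) ht0.le (by ring)
    have hxeq : (1 - t) • x + t • u = x + t • (u - x) := by module
    rw [hxeq] at hcvx
    have habel : x + t • (u - x) - y = (x - y) + t • (u - x) := by abel
    have hnorm : ‖x + t • (u - x) - y‖ ^ 2
        = ‖x - y‖ ^ 2 + 2 * t * I + t ^ 2 * ‖u - x‖ ^ 2 := by
      rw [habel, norm_add_sq_real, real_inner_smul_right, norm_smul,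
        Real.norm_eq_abs, mul_pow, sq_abs, ← hI]
      ring
    rw [hnorm] at hprox
    simp only [smul_eq_mul] at hcvx
    have h2c : γ⁻¹ = 2 * (1 / (2 * γ)) := by
      rw [one_div, mul_inv]; ring
    have hkey2 : 0 ≤ t * (A + t * C) := by
      simp only [hA, hCdef, h2c]
      nlinarith [hprox, hcvx]
    by_contra h'
    push_neg at h'
    nlinarith [mul_pos ht0 (neg_pos.2 h')]
  by_contra hneg
  push_neg at hneg
  have hCp : (0:ℝ) < C + 1 := by linarith
  set t : ℝ := min 1 (-A / (2 * (C + 1))) with htdef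
  have ht0 : 0 < t := lt_min one_pos (div_pos (neg_pos.2 hneg) (by linarith))
  have ht1 : t ≤ 1 := min_le_left _ _
  have h6 := key t ht0 ht1
  have h7 : t * C ≤ -A / 2 := by
    calc t * C ≤ (-A / (2 * (C + 1))) * C :=
          mul_le_mul_of_nonneg_right (min_le_right _ _) hC
      _ ≤ -A / 2 := by
          rw [div_mul_eq_mul_div, div_le_div_iff₀ (by linarith) (by norm_num)]
          nlinarith [neg_pos.2 hneg, hC]
  clear_value t C A
  linarith

lemma subgrad_mono {p : ℕ} {φ : EuclideanSpace ℝ (Fin p) → ℝ}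
    {x x' u u' : EuclideanSpace ℝ (Fin p)}
    (h1 : IsSubgradient φ x u) (h2 : IsSubgradient φ x' u') :
    0 ≤ ⟪u - u', x - x'⟫ := by
  have a1 := h1 x'
  have a2 := h2 x
  have e1 : ⟪u, x' - x⟫ = -⟪u, x - x'⟫ := by
    rw [show x' - x = -(x - x') by abel, inner_neg_right]
  rw [e1] at a1
  rw [inner_sub_left]
  linarith

set_option maxHeartbeats 1000000 in
lemma step_bound {p : ℕ} {L γ : ℝ} (hL : 0 < L) (hγ : 0 < γ)
    {g h f : EuclideanSpace ℝ (Fin p) → ℝ}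
    (hg : ConvexOn ℝ Set.univ g) (hh : ConvexOn ℝ Set.univ h)
    (hf : ConvexOn ℝ Set.univ f) (hfL : LSmooth L f)
    {ystar xstar : EuclideanSpace ℝ (Fin p)}
    (hfix₁ : IsProxPt γ g ystar xstar)
    (hfix₂ : IsProxPt γ h ((2 : ℝ) • xstar - ystar - γ • gradient f xstar) xstar)
    {yk xk zk : EuclideanSpace ℝ (Fin p)}
    (hstepk : IsSplitStep γ g h f yk xk zk) :
    ‖(yk - xk + zk) - ystar‖ ^ 2
      ≤ ‖yk - ystar‖ ^ 2 - γ ^ 2 * (1 - γ * L / 2) * ‖γ⁻¹ • (xk - zk)‖ ^ 2 := by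
  obtain ⟨hpx, hpz⟩ := hstepk
  have ug := prox_subgrad hγ hg hpx
  have ugs := prox_subgrad hγ hg hfix₁
  have uh := prox_subgrad hγ hh hpz
  have uhs := prox_subgrad hγ hh hfix₂
  set D : EuclideanSpace ℝ (Fin p) := yk - ystar with hD
  set X : EuclideanSpace ℝ (Fin p) := xk - xstar with hX
  set Z : EuclideanSpace ℝ (Fin p) := zk - xstar with hZ
  set W : EuclideanSpace ℝ (Fin p) := gradient f xk - gradient f xstar with hW
  set S : EuclideanSpace ℝ (Fin p) := X - Z with hS
  have hγinv : (0:ℝ) < γ⁻¹ := inv_pos.2 hγ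
  -- monotonicity of ∂g
  have m1 : 0 ≤ ⟪D - X, X⟫ := by
    have := subgrad_mono ug ugs
    rw [← smul_sub, real_inner_smul_left] at this
    have h2 := nonneg_of_mul_nonneg_right this hγinv
    have e : yk - xk - (ystar - xstar) = D - X := by rw [hD, hX]; abel
    rwa [e, ← hX] at h2
  -- monotonicity of ∂h
  have m2 : 0 ≤ ⟪(2:ℝ) • X - D - γ • W - Z, Z⟫ := by
    have := subgrad_mono uh uhs
    rw [← smul_sub, real_inner_smul_left] at this
    have h2 := nonneg_of_mul_nonneg_right this hγinv
    have e : (2:ℝ) • xk - yk - γ • gradient f xk - zk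
        - ((2:ℝ) • xstar - ystar - γ • gradient f xstar - xstar)
        = (2:ℝ) • X - D - γ • W - Z := by
      simp only [hX, hD, hW, hZ, smul_sub]
      abel
    rwa [e, ← hZ] at h2
  -- cocoercivity
  have m3 : 1 / L * ‖W‖ ^ 2 ≤ ⟪W, X⟫ := by
    have := cocoercive hf hL hfL.1 hfL.2 xk xstar
    rwa [← hW, ← hX] at this
  -- make the abbreviations opaque for the scalar part
  have hgoalvec : (yk - xk + zk) - ystar = D - S := by
    rw [hD, hS, hX, hZ]; abel
  have hSvec : xk - zk = S := by rw [hS, hX, hZ]; abel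
  clear_value D X Z W S
  -- expansions
  have E1 : ⟪D - X, X⟫ = ⟪D, X⟫ - ⟪X, X⟫ := inner_sub_left _ _ _
  have E2 : ⟪(2:ℝ) • X - D - γ • W - Z, Z⟫
      = 2 * ⟪X, Z⟫ - ⟪D, Z⟫ - γ * ⟪W, Z⟫ - ⟪Z, Z⟫ := by
    rw [inner_sub_left, inner_sub_left, inner_sub_left, real_inner_smul_left,
      real_inner_smul_left]
  have EZ : Z = X - S := by rw [hS]; abel
  have E3 : ⟪W, Z⟫ = ⟪W, X⟫ - ⟪W, S⟫ := by rw [EZ, inner_sub_right]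
  have E4 : ‖S‖ ^ 2 = ⟪X, X⟫ - 2 * ⟪X, Z⟫ + ⟪Z, Z⟫ := by
    rw [← real_inner_self_eq_norm_sq, hS, inner_sub_left, inner_sub_right,
      inner_sub_right, real_inner_comm Z X]
    ring
  have E5 : ⟪D, S⟫ = ⟪D, X⟫ - ⟪D, Z⟫ := by rw [hS, inner_sub_right]
  have E6 : ‖D - S‖ ^ 2 = ‖D‖ ^ 2 - 2 * ⟪D, S⟫ + ‖S‖ ^ 2 := norm_sub_sq_real _ _
  have E7 : ‖γ⁻¹ • S‖ ^ 2 = γ⁻¹ ^ 2 * ‖S‖ ^ 2 := by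
    rw [norm_smul, Real.norm_eq_abs, mul_pow, sq_abs]
  have E8 : ⟪W, S⟫ ≤ ‖W‖ * ‖S‖ := real_inner_le_norm _ _
  rw [hgoalvec, hSvec, E6, E7]
  have hγ2 : γ ^ 2 * γ⁻¹ ^ 2 = 1 := by
    field_simp
  -- chain of scalar inequalities
  have c0 : ⟪D, S⟫ ≥ ‖S‖ ^ 2 + γ * ⟪W, X⟫ - γ * ⟪W, S⟫ := by
    rw [E4, E5]
    rw [E1] at m1
    rw [E2, E3] at m2
    nlinarith [m1, m2]
  have c1 : γ * ⟪W, X⟫ ≥ γ * (1 / L * ‖W‖ ^ 2) :=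
    mul_le_mul_of_nonneg_left m3 hγ.le
  have c2 : γ * ⟪W, S⟫ ≤ γ * (‖W‖ * ‖S‖) :=
    mul_le_mul_of_nonneg_left E8 hγ.le
  have c3 : 0 ≤ γ / L * (2 * ‖W‖ - L * ‖S‖) ^ 2 :=
    mul_nonneg (div_nonneg hγ.le hL.le) (sq_nonneg _)
  have c4 : γ / L * (2 * ‖W‖ - L * ‖S‖) ^ 2
      = 4 * (γ * (1 / L * ‖W‖ ^ 2)) - 4 * (γ * (‖W‖ * ‖S‖)) + γ * L * ‖S‖ ^ 2 := by
    field_simp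
    ring
  rw [c4] at c3
  nlinarith [c0, c1, c2, c3, hγ2, sq_nonneg ‖S‖]

/-- summed bound on the gradient mapping norms. -/
theorem stmt_12 (p : ℕ) (hp : 0 < p) (L : ℝ) (hL : 0 < L) (γ : ℝ) (hγ : 0 < γ)
    (g h f : EuclideanSpace ℝ (Fin p) → ℝ)
    (hg : ConvexOn ℝ Set.univ g) (hh : ConvexOn ℝ Set.univ h)
    (hf : ConvexOn ℝ Set.univ f) (hfL : LSmooth L f)
    (ystar xstar : EuclideanSpace ℝ (Fin p))
    (hfix₁ : IsProxPt γ g ystar xstar)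
    (hfix₂ : IsProxPt γ h ((2 : ℝ) • xstar - ystar - γ • gradient f xstar) xstar)
    (y x z : ℕ → EuclideanSpace ℝ (Fin p))
    (hstep : ∀ k, IsSplitStep γ g h f (y k) (x k) (z k))
    (hupdate : ∀ k, y (k + 1) = y k - x k + z k) :
    ∀ k : ℕ,
      γ ^ 2 * (1 - γ * L / 2) *
          ∑ i ∈ Finset.range (k + 1), ‖γ⁻¹ • (x i - z i)‖ ^ 2 ≤
        ‖y 0 - ystar‖ ^ 2 := by
  have step : ∀ k, ‖y (k + 1) - ystar‖ ^ 2
      ≤ ‖y k - ystar‖ ^ 2 - γ ^ 2 * (1 - γ * L / 2) * ‖γ⁻¹ • (x k - z k)‖ ^ 2 := by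
    intro k
    rw [hupdate k]
    exact step_bound hL hγ hg hh hf hfL hfix₁ hfix₂ (hstep k)
  have aux : ∀ k : ℕ,
      γ ^ 2 * (1 - γ * L / 2) * ∑ i ∈ Finset.range (k + 1), ‖γ⁻¹ • (x i - z i)‖ ^ 2
        + ‖y (k + 1) - ystar‖ ^ 2 ≤ ‖y 0 - ystar‖ ^ 2 := by
    intro k
    induction k with
    | zero =>
        simp only [Finset.sum_range_one, zero_add]
        linarith [step 0]
    | succ n ih =>
        rw [Finset.sum_range_succ, mul_add]
        linarith [step (n + 1)]
  intro k
  have := aux k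
  nlinarith [sq_nonneg ‖y (k + 1) - ystar‖]
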